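/- Let $b_1, b_2 > 0$, $a_3 \in \mathbb{R}$ with $1 - a_3^2 b_2 > 0$, $r \in \mathbb{R}$, and let $u, v \in C^3([0,L])$ satisfy $u(0)=v(0)=u(L)=v(L)=u'(L)=v'(L)=0$. Then $\frac{b_2}{b_1}\int_0^L (-u''' - a_3 v''')\,u\,dx + \int_0^L \big(-\tfrac{r}{b_1}v' - \tfrac{b_2 a_3}{b_1}u''' - \tfrac{1}{b_1}v'''\big)\,v\,dx = -\frac{1}{2b_1}\big[b_2 u'(0)^2 + v'(0)^2 + 2a_3 b_2\,u'(0)v'(0)\big] \leq 0$. -/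

import Mathlib

open MeasureTheory Set

theorem linear_gear_grimshaw_dissipative
    (L b1 b2 a3 r : ℝ) (hL : 0 < L) (hb1 : 0 < b1) (hb2 : 0 < b2)
    (ha3 : 1 - a3 ^ 2 * b2 > 0)
    (u u1 u2 u3 v v1 v2 v3 : ℝ → ℝ)
    (hu1 : ∀ x ∈ Icc 0 L, HasDerivAt u (u1 x) x)
    (hu2 : ∀ x ∈ Icc 0 L, HasDerivAt u1 (u2 x) x)
    (hu3 : ∀ x ∈ Icc 0 L, HasDerivAt u2 (u3 x) x)
    (hu3c : ContinuousOn u3 (Icc 0 L))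
    (hv1 : ∀ x ∈ Icc 0 L, HasDerivAt v (v1 x) x)
    (hv2 : ∀ x ∈ Icc 0 L, HasDerivAt v1 (v2 x) x)
    (hv3 : ∀ x ∈ Icc 0 L, HasDerivAt v2 (v3 x) x)
    (hv3c : ContinuousOn v3 (Icc 0 L))
    (hu0 : u 0 = 0) (hv0 : v 0 = 0) (huL : u L = 0) (hvL : v L = 0)
    (hu1L : u1 L = 0) (hv1L : v1 L = 0) :
    (b2 / b1) * (∫ x in Ioo 0 L, (-(u3 x) - a3 * v3 x) * u x) +
      (∫ x in Ioo 0 L,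
        (-(r / b1) * v1 x - (b2 * a3 / b1) * u3 x - (1 / b1) * v3 x) * v x) =
      -(1 / (2 * b1)) *
        (b2 * (u1 0) ^ 2 + (v1 0) ^ 2 + 2 * a3 * b2 * u1 0 * v1 0) ∧
    -(1 / (2 * b1)) *
        (b2 * (u1 0) ^ 2 + (v1 0) ^ 2 + 2 * a3 * b2 * u1 0 * v1 0) ≤ 0 := by
  have h0L : (0:ℝ) ≤ L := hL.le
  have huIcc : uIcc (0:ℝ) L = Icc 0 L := uIcc_of_le h0L
  -- continuity of lower derivatives
  have hucv : ContinuousOn u (Icc 0 L) := fun x hx => (hu1 x hx).continuousAt.continuousWithinAt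
  have hu1c : ContinuousOn u1 (Icc 0 L) := fun x hx => (hu2 x hx).continuousAt.continuousWithinAt
  have hu2c : ContinuousOn u2 (Icc 0 L) := fun x hx => (hu3 x hx).continuousAt.continuousWithinAt
  have hvcv : ContinuousOn v (Icc 0 L) := fun x hx => (hv1 x hx).continuousAt.continuousWithinAt
  have hv1c : ContinuousOn v1 (Icc 0 L) := fun x hx => (hv2 x hx).continuousAt.continuousWithinAt
  have hv2c : ContinuousOn v2 (Icc 0 L) := fun x hx => (hv3 x hx).continuousAt.continuousWithinAt
  have ii : ∀ f g : ℝ → ℝ, ContinuousOn f (Icc 0 L) → ContinuousOn g (Icc 0 L) →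
      IntervalIntegrable (fun x => f x * g x) volume 0 L := by
    intro f g hf hg
    exact ContinuousOn.intervalIntegrable (by rw [huIcc]; exact hf.mul hg)
  have ftc : ∀ (f f' : ℝ → ℝ), (∀ x ∈ Icc 0 L, HasDerivAt f (f' x) x) →
      ContinuousOn f' (Icc 0 L) → ∫ x in (0:ℝ)..L, f' x = f L - f 0 := by
    intro f f' hf hf'
    exact intervalIntegral.integral_eq_sub_of_hasDerivAt
      (fun x hx => hf x (huIcc ▸ hx))
      (ContinuousOn.intervalIntegrable (by rw [huIcc]; exact hf'))
  have I1 : ∫ x in (0:ℝ)..L, u3 x * u x = (u1 0) ^ 2 / 2 := by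
    have hd : ∀ x ∈ Icc 0 L, HasDerivAt (fun x => u2 x * u x - u1 x ^ 2 / 2) (u3 x * u x) x := by
      intro x hx
      have h := ((hu3 x hx).mul (hu1 x hx)).sub (((hu2 x hx).pow 2).div_const 2)
      exact h.congr_deriv (by push_cast; ring)
    rw [ftc _ _ hd ((hu3c.mul hucv))]
    simp [huL, hu1L, hu0]
  have I2 : ∫ x in (0:ℝ)..L, v3 x * v x = (v1 0) ^ 2 / 2 := by
    have hd : ∀ x ∈ Icc 0 L, HasDerivAt (fun x => v2 x * v x - v1 x ^ 2 / 2) (v3 x * v x) x := by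
      intro x hx
      have h := ((hv3 x hx).mul (hv1 x hx)).sub (((hv2 x hx).pow 2).div_const 2)
      exact h.congr_deriv (by push_cast; ring)
    rw [ftc _ _ hd ((hv3c.mul hvcv))]
    simp [hvL, hv1L, hv0]
  have I3 : ∫ x in (0:ℝ)..L, (v3 x * u x + u3 x * v x) = u1 0 * v1 0 := by
    have hd : ∀ x ∈ Icc 0 L, HasDerivAt
        (fun x => v2 x * u x + u2 x * v x - u1 x * v1 x) (v3 x * u x + u3 x * v x) x := by
      intro x hx
      have h := (((hv3 x hx).mul (hu1 x hx)).add ((hu3 x hx).mul (hv1 x hx))).sub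
        ((hu2 x hx).mul (hv2 x hx))
      exact h.congr_deriv (by push_cast; ring)
    rw [ftc _ _ hd ((hv3c.mul hucv).add (hu3c.mul hvcv))]
    simp [huL, hvL, hu1L, hv1L, hu0, hv0]
  have I4 : ∫ x in (0:ℝ)..L, v1 x * v x = 0 := by
    have hd : ∀ x ∈ Icc 0 L, HasDerivAt (fun x => v x ^ 2 / 2) (v1 x * v x) x := by
      intro x hx
      have h := ((hv1 x hx).pow 2).div_const 2
      exact h.congr_deriv (by push_cast; ring)
    rw [ftc _ _ hd (hv1c.mul hvcv)]
    simp [hvL, hv0]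
  -- split integrals
  have e1 : (∫ x in Ioo 0 L, (-(u3 x) - a3 * v3 x) * u x)
      = -(∫ x in (0:ℝ)..L, u3 x * u x) - a3 * ∫ x in (0:ℝ)..L, v3 x * u x := by
    rw [← integral_Ioc_eq_integral_Ioo, ← intervalIntegral.integral_of_le h0L]
    have hc : ∫ x in (0:ℝ)..L, (-(u3 x) - a3 * v3 x) * u x
        = ∫ x in (0:ℝ)..L, (-(u3 x * u x) - a3 * (v3 x * u x)) :=
      intervalIntegral.integral_congr (fun x _ => by ring)
    have hn : IntervalIntegrable (fun x => -(u3 x * u x)) volume 0 L := (ii u3 u hu3c hucv).neg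
    have hm : IntervalIntegrable (fun x => a3 * (v3 x * u x)) volume 0 L :=
      (ii v3 u hv3c hucv).const_mul a3
    rw [hc, intervalIntegral.integral_sub hn hm,
      intervalIntegral.integral_neg, intervalIntegral.integral_const_mul]
  have e2 : (∫ x in Ioo 0 L, (-(r / b1) * v1 x - (b2 * a3 / b1) * u3 x - (1 / b1) * v3 x) * v x)
      = (-(r / b1)) * (∫ x in (0:ℝ)..L, v1 x * v x)
        - (b2 * a3 / b1) * (∫ x in (0:ℝ)..L, u3 x * v x)
        - (1 / b1) * ∫ x in (0:ℝ)..L, v3 x * v x := by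
    rw [← integral_Ioc_eq_integral_Ioo, ← intervalIntegral.integral_of_le h0L]
    have hc : ∫ x in (0:ℝ)..L, (-(r / b1) * v1 x - (b2 * a3 / b1) * u3 x - (1 / b1) * v3 x) * v x
        = ∫ x in (0:ℝ)..L, ((-(r / b1)) * (v1 x * v x) - (b2 * a3 / b1) * (u3 x * v x)
            - (1 / b1) * (v3 x * v x)) :=
      intervalIntegral.integral_congr (fun x _ => by ring)
    have ha : IntervalIntegrable (fun x => (-(r / b1)) * (v1 x * v x)) volume 0 L :=
      (ii v1 v hv1c hvcv).const_mul (-(r / b1))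
    have hb : IntervalIntegrable (fun x => (b2 * a3 / b1) * (u3 x * v x)) volume 0 L :=
      (ii u3 v hu3c hvcv).const_mul (b2 * a3 / b1)
    have hcc : IntervalIntegrable (fun x => (1 / b1) * (v3 x * v x)) volume 0 L :=
      (ii v3 v hv3c hvcv).const_mul (1 / b1)
    have hab : IntervalIntegrable
        (fun x => (-(r / b1)) * (v1 x * v x) - (b2 * a3 / b1) * (u3 x * v x)) volume 0 L :=
      ha.sub hb
    rw [hc, intervalIntegral.integral_sub hab hcc, intervalIntegral.integral_sub ha hb,
      intervalIntegral.integral_const_mul, intervalIntegral.integral_const_mul,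
      intervalIntegral.integral_const_mul]
  constructor
  · rw [e1, e2, I1, I2, I4]
    have hsum : (∫ x in (0:ℝ)..L, v3 x * u x) + (∫ x in (0:ℝ)..L, u3 x * v x) = u1 0 * v1 0 := by
      rw [← intervalIntegral.integral_add (ii v3 u hv3c hucv) (ii u3 v hu3c hvcv)]
      exact I3
    have hIb : (∫ x in (0:ℝ)..L, u3 x * v x)
        = u1 0 * v1 0 - ∫ x in (0:ℝ)..L, v3 x * u x := by linarith
    rw [hIb]
    have hb1' : b1 ≠ 0 := hb1.ne'
    field_simp
    ring
  · have hE : 0 ≤ b2 * (u1 0) ^ 2 + (v1 0) ^ 2 + 2 * a3 * b2 * u1 0 * v1 0 := by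
      nlinarith [sq_nonneg (u1 0 + a3 * v1 0), sq_nonneg (v1 0), mul_nonneg (le_of_lt ha3) (sq_nonneg (v1 0)), mul_nonneg hb2.le (sq_nonneg (u1 0 + a3 * v1 0))]
    have h : 0 ≤ 1 / (2 * b1) := by positivity
    nlinarith
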